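/- Define z(ζ) = hm(ζ;γ_E) + i·hm(ζ;γ_N) − hm(ζ;γ_W) − i·hm(ζ;γ_S) and ϑ(ζ) = (√2/2)(hm(ζ;γ_E) − hm(ζ;γ_N) + hm(ζ;γ_W) − hm(ζ;γ_S)) for ζ in the unit disc, where γ_E = (e^{−iπ/4},e^{iπ/4}), γ_N = (e^{iπ/4},e^{3iπ/4}), γ_W = (e^{3iπ/4},e^{5iπ/4}), γ_S = (e^{5iπ/4},e^{7iπ/4}) are the four boundary arcs. Then the conformality relation (∂_ζ z)(∂_ζ z̄) = (∂_ζ ϑ)² holds for all ζ ∈ 𝔻. -/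

import Mathlib

open Complex Metric

/-- The four angles `π/4 + m·π/2`, `m = 0,1,2,3`, separating the boundary arcs
`γ_E, γ_N, γ_W, γ_S` of the unit circle. -/
noncomputable def arcAngle (m : Fin 4) : ℝ := Real.pi / 4 + (m : ℕ) * (Real.pi / 2)

/-- Wirtinger derivative `∂_ζ h = ½(∂_{Re ζ} − i∂_{Im ζ})h`. -/
noncomputable def wirt (h : ℂ → ℂ) (ζ : ℂ) : ℂ :=
  (1/2) * (deriv (fun s : ℝ => h (ζ + s)) 0 - I * deriv (fun s : ℝ => h (ζ + s * I)) 0)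

lemma im_ofReal_hasDerivAt {F : ℝ → ℂ} {F' : ℂ} {s : ℝ} (h : HasDerivAt F F' s) :
    HasDerivAt (fun t => (((F t).im : ℝ) : ℂ)) ((F'.im : ℝ) : ℂ) s := by
  have h1 : HasDerivAt (fun t => (F t).im) F'.im s := by
    exact (Complex.imCLM.hasFDerivAt (x := F s)).comp_hasDerivAt s h
  exact h1.ofReal_comp

lemma path_hasDerivAt {g : ℂ → ℂ} {d ζ : ℂ} (dir : ℂ) (hg : HasDerivAt g d ζ) :
    HasDerivAt (fun s : ℝ => g (ζ + s * dir)) (d * dir) 0 := by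
  have h2 : HasDerivAt (fun w : ℂ => ζ + w * dir) dir 0 := by
    simpa using ((hasDerivAt_id (0:ℂ)).mul_const dir).const_add ζ
  have hg' : HasDerivAt g d (ζ + (0:ℂ) * dir) := by simpa using hg
  have := (hg'.comp (0:ℂ) h2).comp_ofReal (z := 0)
  simpa [Function.comp] using this

lemma wirt_eval {h g0 g1 g2 g3 : ℂ → ℂ} {κ0 κ1 κ2 κ3 C d0 d1 d2 d3 : ℂ} {ζ : ℂ}
    (hζ : ζ ∈ ball (0:ℂ) 1)
    (hloc : ∀ w ∈ ball (0:ℂ) 1, h w = C + κ0 * (((g0 w).im : ℝ) : ℂ)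
      + κ1 * (((g1 w).im : ℝ) : ℂ) + κ2 * (((g2 w).im : ℝ) : ℂ) + κ3 * (((g3 w).im : ℝ) : ℂ))
    (h0 : HasDerivAt g0 d0 ζ) (h1 : HasDerivAt g1 d1 ζ)
    (h2 : HasDerivAt g2 d2 ζ) (h3 : HasDerivAt g3 d3 ζ) :
    wirt h ζ = -(I/2) * (κ0*d0 + κ1*d1 + κ2*d2 + κ3*d3) := by
  set H : ℂ → ℂ := fun w => C + κ0 * (((g0 w).im : ℝ) : ℂ)
      + κ1 * (((g1 w).im : ℝ) : ℂ) + κ2 * (((g2 w).im : ℝ) : ℂ) + κ3 * (((g3 w).im : ℝ) : ℂ)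
    with hH
  have hev : h =ᶠ[nhds ζ] H :=
    Filter.eventuallyEq_of_mem (isOpen_ball.mem_nhds hζ) hloc
  have pathD : ∀ dir : ℂ, HasDerivAt (fun s : ℝ => H (ζ + s * dir))
      (κ0 * (((d0*dir).im : ℝ) : ℂ) + κ1 * (((d1*dir).im : ℝ) : ℂ)
        + κ2 * (((d2*dir).im : ℝ) : ℂ) + κ3 * (((d3*dir).im : ℝ) : ℂ)) 0 := by
    intro dir
    exact ((((im_ofReal_hasDerivAt (path_hasDerivAt dir h0)).const_mul κ0).const_add C).add
      ((im_ofReal_hasDerivAt (path_hasDerivAt dir h1)).const_mul κ1)).add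
      ((im_ofReal_hasDerivAt (path_hasDerivAt dir h2)).const_mul κ2) |>.add
      ((im_ofReal_hasDerivAt (path_hasDerivAt dir h3)).const_mul κ3)
  have tend : ∀ dir : ℂ, Filter.Tendsto (fun s : ℝ => ζ + s * dir) (nhds 0) (nhds ζ) := by
    intro dir
    have : Continuous (fun s : ℝ => ζ + s * dir) := by fun_prop
    simpa using this.tendsto 0
  have key : ∀ dir : ℂ, deriv (fun s : ℝ => h (ζ + s * dir)) 0
      = κ0 * (((d0*dir).im : ℝ) : ℂ) + κ1 * (((d1*dir).im : ℝ) : ℂ)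
        + κ2 * (((d2*dir).im : ℝ) : ℂ) + κ3 * (((d3*dir).im : ℝ) : ℂ) := by
    intro dir
    have e1 : (fun s : ℝ => h (ζ + s * dir)) =ᶠ[nhds 0] (fun s : ℝ => H (ζ + s * dir)) :=
      hev.comp_tendsto (tend dir)
    rw [e1.deriv_eq]
    exact (pathD dir).deriv
  have k1 : deriv (fun s : ℝ => h (ζ + s)) 0
      = κ0 * ((d0.im : ℝ) : ℂ) + κ1 * ((d1.im : ℝ) : ℂ)
        + κ2 * ((d2.im : ℝ) : ℂ) + κ3 * ((d3.im : ℝ) : ℂ) := by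
    have := key 1
    simpa using this
  have k2 := key I
  rw [wirt, k1, k2]
  simp only [Complex.mul_I_im]
  linear_combination (-(I:ℂ)/2) * (κ0 * Complex.re_add_im d0 + κ1 * Complex.re_add_im d1
    + κ2 * Complex.re_add_im d2 + κ3 * Complex.re_add_im d3)
    + ((κ0 * (d0.im:ℂ) + κ1 * (d1.im:ℂ) + κ2 * (d2.im:ℂ) + κ3 * (d3.im:ℂ))/2) * Complex.I_sq

lemma branch_eq (θ : ℝ) (a : ℂ → ℝ) (hacont : ContinuousOn a (ball 0 1))
    (haarg : ∀ ζ ∈ ball (0:ℂ) 1,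
      (‖Complex.exp ((θ:ℂ) * I) - ζ‖ : ℂ) * Complex.exp ((a ζ : ℝ) * I)
        = Complex.exp ((θ:ℂ) * I) - ζ)
    (ha0 : a 0 = θ) :
    ∀ ζ ∈ ball (0:ℂ) 1, a ζ = θ + (Complex.log (1 - ζ * Complex.exp (-(θ:ℂ) * I))).im := by
  set ε := Complex.exp (-(θ:ℂ) * I) with hε
  set v : ℂ → ℂ := fun w => 1 - w * ε with hv
  set b : ℂ → ℝ := fun w => θ + Complex.arg (v w) with hb
  have hεabs : ‖ε‖ = 1 := by simp [hε, Complex.norm_exp]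
  have hvre : ∀ w ∈ ball (0:ℂ) 1, 0 < (v w).re := by
    intro w hw
    have h1 : ‖w * ε‖ < 1 := by
      rw [norm_mul, hεabs, mul_one]
      simpa [Complex.dist_eq] using hw
    have h2 : (w*ε).re ≤ ‖w*ε‖ := Complex.re_le_norm _
    have : (v w).re = 1 - (w*ε).re := by simp [hv]
    rw [this]; linarith
  have hvslit : ∀ w ∈ ball (0:ℂ) 1, v w ∈ Complex.slitPlane := fun w hw => Or.inl (hvre w hw)
  have hmul : Complex.exp ((θ:ℂ)*I) * ε = 1 := by
    rw [hε, ← Complex.exp_add]; ring_nf; exact Complex.exp_zero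
  have hw_eq : ∀ w : ℂ, Complex.exp ((θ:ℂ)*I) - w = Complex.exp ((θ:ℂ)*I) * v w := by
    intro w; simp only [hv]; linear_combination w * hmul
  have habs : ∀ w : ℂ, ‖Complex.exp ((θ:ℂ)*I) - w‖ = ‖v w‖ := by
    intro w; rw [hw_eq, norm_mul, Complex.norm_exp]; simp
  have hint : ∀ w ∈ ball (0:ℂ) 1, ∃ n : ℤ, a w - b w = n * (2*Real.pi) := by
    intro w hw
    have h3 := haarg w hw
    have h4 : (‖v w‖ : ℂ) * Complex.exp (((b w : ℝ):ℂ) * I)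
        = Complex.exp ((θ:ℂ)*I) - w := by
      have hbw : ((b w : ℝ):ℂ) * I = (θ:ℂ)*I + (Complex.arg (v w) : ℂ) * I := by
        simp only [hb]; push_cast; ring
      rw [hbw, Complex.exp_add, hw_eq]
      have h5 := Complex.norm_mul_exp_arg_mul_I (v w)
      linear_combination Complex.exp ((θ:ℂ)*I) * h5
    have habsne : (‖v w‖ : ℂ) ≠ 0 := by
      simp only [ne_eq, Complex.ofReal_eq_zero, norm_eq_zero]
      exact Complex.slitPlane_ne_zero (hvslit w hw)
    have h6 : Complex.exp (((a w : ℝ):ℂ) * I) = Complex.exp (((b w : ℝ):ℂ) * I) := by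
      apply mul_left_cancel₀ habsne
      rw [h4, ← h3, habs]
    have h7 : Complex.exp (((a w : ℝ):ℂ) * I - ((b w : ℝ):ℂ) * I) = 1 := by
      rw [Complex.exp_sub, h6, div_self (Complex.exp_ne_zero _)]
    rw [Complex.exp_eq_one_iff] at h7
    obtain ⟨n, hn⟩ := h7
    refine ⟨n, ?_⟩
    have h8 : ((a w - b w : ℝ):ℂ) = ((n * (2*Real.pi) : ℝ):ℂ) := by
      apply mul_right_cancel₀ Complex.I_ne_zero
      push_cast
      linear_combination hn
    exact_mod_cast h8
  have hbcont : ContinuousOn b (ball (0:ℂ) 1) := by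
    intro w hw
    apply ContinuousAt.continuousWithinAt
    have hvc : ContinuousAt v w := by fun_prop
    exact (continuousAt_const.add ((Complex.continuousAt_arg (hvslit w hw)).comp hvc))
  have hgcont : ContinuousOn (fun w => a w - b w) (ball (0:ℂ) 1) := hacont.sub hbcont
  have h0mem : (0:ℂ) ∈ ball (0:ℂ) 1 := mem_ball_self one_pos
  have hg0 : a 0 - b 0 = 0 := by
    simp [hb, hv, ha0, Complex.arg_one]
  intro ζ hζ
  obtain ⟨n, hn⟩ := hint ζ hζ
  have hpi := Real.pi_pos
  have hn0 : n = 0 := by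
    by_contra hne
    rcases lt_or_gt_of_ne hne with h | h
    · have hmem : -Real.pi ∈ Set.Icc (a ζ - b ζ) (a 0 - b 0) := by
        rw [hg0, hn]
        constructor
        · have hn1 : n ≤ -1 := by omega
          have : (n:ℝ) ≤ -1 := by exact_mod_cast hn1
          nlinarith
        · linarith
      obtain ⟨ξ, hξ, hgξ⟩ := (convex_ball (0:ℂ) 1).isPreconnected.intermediate_value
        hζ h0mem hgcont hmem
      obtain ⟨m, hm⟩ := hint ξ hξ
      have hgξ' : a ξ - b ξ = -Real.pi := hgξ
      rw [hgξ'] at hm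
      have h9 : (2*(m:ℝ)) * Real.pi = (-1) * Real.pi := by linarith
      have h10 : (2*(m:ℝ)) = -1 := mul_right_cancel₀ Real.pi_ne_zero h9
      have : (2*m : ℤ) = -1 := by exact_mod_cast h10
      omega
    · have hmem : Real.pi ∈ Set.Icc (a 0 - b 0) (a ζ - b ζ) := by
        rw [hg0, hn]
        constructor
        · linarith
        · have hn1 : 1 ≤ n := by omega
          have : (1:ℝ) ≤ (n:ℝ) := by exact_mod_cast hn1
          nlinarith
      obtain ⟨ξ, hξ, hgξ⟩ := (convex_ball (0:ℂ) 1).isPreconnected.intermediate_value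
        h0mem hζ hgcont hmem
      obtain ⟨m, hm⟩ := hint ξ hξ
      have hgξ' : a ξ - b ξ = Real.pi := hgξ
      rw [hgξ'] at hm
      have h9 : (2*(m:ℝ)) * Real.pi = 1 * Real.pi := by linarith
      have h10 : (2*(m:ℝ)) = 1 := mul_right_cancel₀ Real.pi_ne_zero h9
      have : (2*m : ℤ) = 1 := by exact_mod_cast h10
      omega
  rw [hn0] at hn
  have : a ζ = b ζ := by push_cast at hn; linarith
  rw [this, hb, Complex.log_im]

lemma slit_aux {ζ : ℂ} (hζ : ζ ∈ ball (0:ℂ) 1) (c : ℂ) (hc : ‖c‖ = 1) :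
    0 < (1 - ζ * c).re := by
  have h1 : ‖ζ * c‖ < 1 := by
    rw [norm_mul, hc, mul_one]
    simpa [Complex.dist_eq] using hζ
  have h2 : (ζ*c).re ≤ ‖ζ*c‖ := Complex.re_le_norm _
  have : (1 - ζ * c).re = 1 - (ζ*c).re := by simp
  rw [this]; linarith

set_option maxHeartbeats 1000000 in
lemma key_alg (u ζ : ℂ) (h0 : 1 - ζ*u ≠ 0) (h1 : 1 + ζ*(I*u) ≠ 0)
    (h2 : 1 + ζ*u ≠ 0) (h3 : 1 - ζ*(I*u) ≠ 0) :
    ((1-I) * (-u/(1-ζ*u)) + (1+I) * (-(-I*u)/(1-ζ*(-I*u))) + (-1+I) * (-(-u)/(1-ζ*(-u))) + (-1-I) * (-(I*u)/(1-ζ*(I*u))))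
    * ((1+I) * (-u/(1-ζ*u)) + (1-I) * (-(-I*u)/(1-ζ*(-I*u))) + (-1-I) * (-(-u)/(1-ζ*(-u))) + (-1+I) * (-(I*u)/(1-ζ*(I*u))))
    = 2 * ((-u/(1-ζ*u)) - (-(-I*u)/(1-ζ*(-I*u))) + (-(-u)/(1-ζ*(-u))) - (-(I*u)/(1-ζ*(I*u))))^2 := by
  have e1 : 1 - ζ*(-I*u) = 1 + ζ*(I*u) := by ring
  have e2 : 1 - ζ*(-u) = 1 + ζ*u := by ring
  rw [e1, e2]
  set q0 : ℂ := 1 - ζ*u with hq0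
  set q1 : ℂ := 1 + ζ*(I*u) with hq1
  set q2 : ℂ := 1 + ζ*u with hq2
  set q3 : ℂ := 1 - ζ*(I*u) with hq3
  have hNA : (1-I) * (-u/q0) + (1+I) * (-(-I*u)/q1) + (-1+I) * (-(-u)/q2) + (-1-I) * (-(I*u)/q3)
      = ((1-I)*(-u)*(q1*q2*q3) + (1+I)*(I*u)*(q0*q2*q3) + (-1+I)*u*(q0*q1*q3) + (-1-I)*(-(I*u))*(q0*q1*q2)) / (q0*q1*q2*q3) := by
    field_simp
  have hNB : (1+I) * (-u/q0) + (1-I) * (-(-I*u)/q1) + (-1-I) * (-(-u)/q2) + (-1+I) * (-(I*u)/q3)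
      = ((1+I)*(-u)*(q1*q2*q3) + (1-I)*(I*u)*(q0*q2*q3) + (-1-I)*u*(q0*q1*q3) + (-1+I)*(-(I*u))*(q0*q1*q2)) / (q0*q1*q2*q3) := by
    field_simp
  have hNZ : (-u/q0) - (-(-I*u)/q1) + (-(-u)/q2) - (-(I*u)/q3)
      = ((-u)*(q1*q2*q3) + (-(I*u))*(q0*q2*q3) + u*(q0*q1*q3) + (I*u)*(q0*q1*q2)) / (q0*q1*q2*q3) := by
    field_simp
    ring
  rw [hNA, hNB, hNZ, div_mul_div_comm, div_pow]
  rw [show ((1-I)*(-u)*(q1*q2*q3) + (1+I)*(I*u)*(q0*q2*q3) + (-1+I)*u*(q0*q1*q3) + (-1-I)*(-(I*u))*(q0*q1*q2))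
      * ((1+I)*(-u)*(q1*q2*q3) + (1-I)*(I*u)*(q0*q2*q3) + (-1-I)*u*(q0*q1*q3) + (-1+I)*(-(I*u))*(q0*q1*q2))
      = 2 * ((-u)*(q1*q2*q3) + (-(I*u))*(q0*q2*q3) + u*(q0*q1*q3) + (I*u)*(q0*q1*q2))^2 from by
    simp only [hq0, hq1, hq2, hq3]
    linear_combination (4*u^2 - 8*u^4*ζ^2 - 8*I*u^2 + 8*I*u^4*ζ^2 - 4*I^2*u^2 + 8*I^2*u^4*ζ^2 + 4*I^2*u^6*ζ^4 + 8*I^3*u^4*ζ^2 - 8*I^3*u^6*ζ^4 - 4*I^4*u^6*ζ^4) * Complex.I_sq]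
  ring
set_option maxHeartbeats 2000000 in
/-- Conformality relation `(∂_ζ z)(∂_ζ z̄) = (∂_ζ ϑ)²` for
`z = hm_E + i·hm_N − hm_W − i·hm_S` and `ϑ = (√2/2)(hm_E − hm_N + hm_W − hm_S)`,
where `hm_E, hm_N, hm_W, hm_S` are the harmonic measures of the four quarter-arcs
`γ_E = (e^{−iπ/4},e^{iπ/4})`, `γ_N = (e^{iπ/4},e^{3iπ/4})`,
`γ_W = (e^{3iπ/4},e^{5iπ/4})`, `γ_S = (e^{5iπ/4},e^{7iπ/4})` of the unit disc,
expressed via continuous argument branches `a m` of `arg(e^{iθ_m} − ζ)`. -/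
theorem aztec_surface_conformal
    (a : Fin 4 → ℂ → ℝ)
    (hacont : ∀ m, ContinuousOn (a m) (ball 0 1))
    (haarg : ∀ m, ∀ ζ ∈ ball (0:ℂ) 1,
      (‖Complex.exp ((arcAngle m : ℝ) * I) - ζ‖ : ℂ)
          * Complex.exp ((a m ζ : ℝ) * I)
        = Complex.exp ((arcAngle m : ℝ) * I) - ζ)
    (ha0 : ∀ m, a m 0 = arcAngle m)
    (hmE hmN hmW hmS : ℂ → ℝ)
    (hE : ∀ ζ, hmE ζ = (1 / Real.pi) * (a 0 ζ - (a 3 ζ - 2 * Real.pi)) - 1/4)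
    (hN : ∀ ζ, hmN ζ = (1 / Real.pi) * (a 1 ζ - a 0 ζ) - 1/4)
    (hW : ∀ ζ, hmW ζ = (1 / Real.pi) * (a 2 ζ - a 1 ζ) - 1/4)
    (hS : ∀ ζ, hmS ζ = (1 / Real.pi) * (a 3 ζ - a 2 ζ) - 1/4)
    (z : ℂ → ℂ) (ϑ : ℂ → ℝ)
    (hz : ∀ ζ, z ζ = (hmE ζ : ℝ) + I * (hmN ζ : ℝ) - (hmW ζ : ℝ) - I * (hmS ζ : ℝ))
    (hϑ : ∀ ζ, ϑ ζ = (Real.sqrt 2 / 2) * (hmE ζ - hmN ζ + hmW ζ - hmS ζ)) :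
    ∀ ζ ∈ ball (0:ℂ) 1,
      wirt z ζ * wirt (fun w => (starRingEnd ℂ) (z w)) ζ
        = (wirt (fun w => ((ϑ w : ℝ) : ℂ)) ζ) ^ 2 := by
  intro ζ hζ
  have hπC : (Real.pi:ℂ) ≠ 0 := Complex.ofReal_ne_zero.mpr Real.pi_ne_zero
  have hA : ∀ m : Fin 4, ∀ w ∈ ball (0:ℂ) 1,
      a m w = arcAngle m + (Complex.log (1 - w * Complex.exp (-(arcAngle m:ℂ) * I))).im :=
    fun m => branch_eq _ _ (hacont m) (haarg m) (ha0 m)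
  have habsε : ∀ m : Fin 4, ‖Complex.exp (-(arcAngle m:ℂ) * I)‖ = 1 := by
    intro m
    rw [show (-(arcAngle m:ℂ) * I) = ((-(arcAngle m) : ℝ):ℂ) * I by push_cast; ring]
    exact Complex.norm_exp_ofReal_mul_I _
  have hne : ∀ m : Fin 4, 1 - ζ * Complex.exp (-(arcAngle m:ℂ) * I) ≠ 0 := fun m =>
    Complex.slitPlane_ne_zero (Or.inl (slit_aux hζ _ (habsε m)))
  have hder : ∀ m : Fin 4, HasDerivAt
      (fun w : ℂ => Complex.log (1 - w * Complex.exp (-(arcAngle m:ℂ) * I)))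
      (-(Complex.exp (-(arcAngle m:ℂ) * I)) / (1 - ζ * Complex.exp (-(arcAngle m:ℂ) * I))) ζ := by
    intro m
    have hv : HasDerivAt (fun w : ℂ => 1 - w * Complex.exp (-(arcAngle m:ℂ)*I))
        (-(Complex.exp (-(arcAngle m:ℂ)*I))) ζ := by
      simpa using ((hasDerivAt_id ζ).mul_const (Complex.exp (-(arcAngle m:ℂ)*I))).const_sub 1
    exact hv.clog (Or.inl (slit_aux hζ _ (habsε m)))
  have e0 : arcAngle 0 = Real.pi/4 := by rw [arcAngle]; norm_num [show ((0:Fin 4):ℕ) = 0 from rfl]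
  have e1 : arcAngle 1 = Real.pi/4 + Real.pi/2 := by rw [arcAngle]; norm_num [show ((1:Fin 4):ℕ) = 1 from rfl]
  have e2 : arcAngle 2 = Real.pi/4 + 2*(Real.pi/2) := by rw [arcAngle]; norm_num [show ((2:Fin 4):ℕ) = 2 from rfl]
  have e3 : arcAngle 3 = Real.pi/4 + 3*(Real.pi/2) := by rw [arcAngle]; norm_num [show ((3:Fin 4):ℕ) = 3 from rfl]
  set s : ℂ := ((Real.sqrt 2 : ℝ) : ℂ) with hsqrt
  have hlocz : ∀ w ∈ ball (0:ℂ) 1, z w = 0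
      + (1-I)/(Real.pi:ℂ) * (((Complex.log (1 - w * Complex.exp (-(arcAngle 0:ℂ) * I))).im : ℝ) : ℂ)
      + (1+I)/(Real.pi:ℂ) * (((Complex.log (1 - w * Complex.exp (-(arcAngle 1:ℂ) * I))).im : ℝ) : ℂ)
      + (-1+I)/(Real.pi:ℂ) * (((Complex.log (1 - w * Complex.exp (-(arcAngle 2:ℂ) * I))).im : ℝ) : ℂ)
      + (-1-I)/(Real.pi:ℂ) * (((Complex.log (1 - w * Complex.exp (-(arcAngle 3:ℂ) * I))).im : ℝ) : ℂ) := by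
    intro w hw
    rw [hz w, hE w, hN w, hW w, hS w, hA 0 w hw, hA 1 w hw, hA 2 w hw, hA 3 w hw,
      e0, e1, e2, e3]
    push_cast
    ring
  have hlocc : ∀ w ∈ ball (0:ℂ) 1, (starRingEnd ℂ) (z w) = 0
      + (1+I)/(Real.pi:ℂ) * (((Complex.log (1 - w * Complex.exp (-(arcAngle 0:ℂ) * I))).im : ℝ) : ℂ)
      + (1-I)/(Real.pi:ℂ) * (((Complex.log (1 - w * Complex.exp (-(arcAngle 1:ℂ) * I))).im : ℝ) : ℂ)
      + (-1-I)/(Real.pi:ℂ) * (((Complex.log (1 - w * Complex.exp (-(arcAngle 2:ℂ) * I))).im : ℝ) : ℂ)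
      + (-1+I)/(Real.pi:ℂ) * (((Complex.log (1 - w * Complex.exp (-(arcAngle 3:ℂ) * I))).im : ℝ) : ℂ) := by
    intro w hw
    rw [hz w]
    simp only [map_sub, map_add, map_mul, Complex.conj_I, Complex.conj_ofReal]
    rw [hE w, hN w, hW w, hS w, hA 0 w hw, hA 1 w hw, hA 2 w hw, hA 3 w hw,
      e0, e1, e2, e3]
    push_cast
    ring
  have hlocϑ : ∀ w ∈ ball (0:ℂ) 1, ((ϑ w : ℝ) : ℂ) = 0
      + (s/(Real.pi:ℂ)) * (((Complex.log (1 - w * Complex.exp (-(arcAngle 0:ℂ) * I))).im : ℝ) : ℂ)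
      + (-(s/(Real.pi:ℂ))) * (((Complex.log (1 - w * Complex.exp (-(arcAngle 1:ℂ) * I))).im : ℝ) : ℂ)
      + (s/(Real.pi:ℂ)) * (((Complex.log (1 - w * Complex.exp (-(arcAngle 2:ℂ) * I))).im : ℝ) : ℂ)
      + (-(s/(Real.pi:ℂ))) * (((Complex.log (1 - w * Complex.exp (-(arcAngle 3:ℂ) * I))).im : ℝ) : ℂ) := by
    intro w hw
    rw [hϑ w, hE w, hN w, hW w, hS w, hA 0 w hw, hA 1 w hw, hA 2 w hw, hA 3 w hw,
      e0, e1, e2, e3, hsqrt]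
    push_cast
    ring
  have wz := wirt_eval hζ hlocz (hder 0) (hder 1) (hder 2) (hder 3)
  have wc := wirt_eval hζ hlocc (hder 0) (hder 1) (hder 2) (hder 3)
  have wϑ := wirt_eval hζ hlocϑ (hder 0) (hder 1) (hder 2) (hder 3)
  rw [wz, wc, wϑ]
  -- exponential relations
  set u : ℂ := Complex.exp (-(arcAngle 0:ℂ) * I) with hu
  have hhalf : Complex.exp (-((Real.pi/2 : ℝ):ℂ) * I) = -I := by
    rw [show (-((Real.pi/2 : ℝ):ℂ) * I) = ((-(Real.pi/2) : ℝ):ℂ) * I by push_cast; ring,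
      Complex.exp_mul_I, ← Complex.ofReal_cos, ← Complex.ofReal_sin]
    simp [Real.cos_pi_div_two, Real.sin_pi_div_two]
  have hstep : ∀ x : ℝ, Complex.exp (-((x + Real.pi/2 : ℝ):ℂ) * I)
      = -I * Complex.exp (-((x:ℝ):ℂ) * I) := by
    intro x
    rw [show (-((x + Real.pi/2 : ℝ):ℂ) * I) = (-((Real.pi/2:ℝ):ℂ) * I) + (-((x:ℝ):ℂ) * I) by
      push_cast; ring, Complex.exp_add, hhalf]
  have hε1 : Complex.exp (-(arcAngle 1:ℂ) * I) = -I * u := by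
    rw [show arcAngle 1 = arcAngle 0 + Real.pi/2 by rw [e0, e1], hstep, hu]
  have hε2 : Complex.exp (-(arcAngle 2:ℂ) * I) = -u := by
    have h2' : Complex.exp (-(arcAngle 2:ℂ) * I) = -I * (-I * u) := by
      rw [show arcAngle 2 = arcAngle 1 + Real.pi/2 by rw [e1, e2]; ring, hstep, hε1]
    linear_combination h2' + u * Complex.I_sq
  have hε3 : Complex.exp (-(arcAngle 3:ℂ) * I) = I * u := by
    have h3' : Complex.exp (-(arcAngle 3:ℂ) * I) = -I * (-u) := by
      rw [show arcAngle 3 = arcAngle 2 + Real.pi/2 by rw [e2, e3]; ring, hstep, hε2]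
    linear_combination h3'
  have hne0 : 1 - ζ * u ≠ 0 := hne 0
  have hne1 : 1 + ζ * (I*u) ≠ 0 := by
    have := hne 1; rw [hε1] at this
    rw [show (1 + ζ*(I*u) : ℂ) = 1 - ζ*(-I*u) from by ring]
    exact this
  have hne2 : 1 + ζ * u ≠ 0 := by
    have := hne 2; rw [hε2] at this
    rw [show (1 + ζ*u : ℂ) = 1 - ζ*(-u) from by ring]
    exact this
  have hne3 : 1 - ζ * (I*u) ≠ 0 := by
    have := hne 3; rw [hε3] at this; exact this
  rw [hε1, hε2, hε3]
  have hs2 : s * s = 2 := by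
    rw [hsqrt, ← Complex.ofReal_mul, Real.mul_self_sqrt (by norm_num : (0:ℝ) ≤ 2)]
    norm_num
  have key := key_alg u ζ hne0 hne1 hne2 hne3
  linear_combination (I^2/(4*(Real.pi:ℂ)^2)) * key - (I^2/(4*(Real.pi:ℂ)^2))
      * ((-u/(1-ζ*u)) - (-(-I*u)/(1-ζ*(-I*u))) + (-(-u)/(1-ζ*(-u))) - (-(I*u)/(1-ζ*(I*u))))^2
      * hs2
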